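/- Let S = {S_Q}_Q be a generator family of w_F, indexed by the proper subgroups Q of P. For every F-essential subgroup Q of P there exists φ ∈ F(P,Q) such that S_{φ(Q)} contains an F-irreducible element, i.e. an element of w_F(φ(Q)) \ r_F(φ(Q)). -/

import Mathlib

namespace Puig

variable {G : Type*} [Group G]

/-- The conjugation morphism `x ↦ u x u⁻¹` from `R` to `Q`. -/
def conjMap {Q R : Subgroup G} (u : G) (h : ∀ x ∈ R, u * x * u⁻¹ ∈ Q) : ↥R →* ↥Q where
  toFun x := ⟨u * x * u⁻¹, h x x.2⟩
  map_one' := by ext; simp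
  map_mul' x y := by ext; simp

/-- The data of a `P`-category: a set of morphisms for each pair of subgroups. -/
structure PCat (G : Type*) [Group G] where
  Hom : ∀ _Q _R : Subgroup G, Set (↥_R →* ↥_Q)

/-- `F` is a divisible `P`-category. -/
structure PCat.IsDivisible (F : PCat G) : Prop where
  inj : ∀ ⦃Q R : Subgroup G⦄ ⦃φ : ↥R →* ↥Q⦄, φ ∈ F.Hom Q R → Function.Injective φ
  conj_mem : ∀ ⦃Q R : Subgroup G⦄ (u : G) (h : ∀ x ∈ R, u * x * u⁻¹ ∈ Q),
    conjMap u h ∈ F.Hom Q R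
  comp_mem : ∀ ⦃Q R T : Subgroup G⦄ ⦃φ : ↥R →* ↥Q⦄ ⦃ψ : ↥T →* ↥R⦄,
    φ ∈ F.Hom Q R → ψ ∈ F.Hom R T → φ.comp ψ ∈ F.Hom Q T
  div : ∀ ⦃Q R T : Subgroup G⦄ ⦃φ : ↥R →* ↥Q⦄ (ψ : ↥T →* ↥R), φ ∈ F.Hom Q R →
    (φ.comp ψ ∈ F.Hom Q T ↔ ψ ∈ F.Hom R T)

/-- The image `φ(Q) ≤ G` of a morphism `φ : Q → R` between subgroups of `G`. -/
def img {Q R : Subgroup G} (φ : ↥Q →* ↥R) : Subgroup G := φ.range.map R.subtype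

/-- The corestriction `Q → φ(Q)` of a morphism `φ`. -/
def toImg {Q R : Subgroup G} (φ : ↥Q →* ↥R) : ↥Q →* ↥(img φ) where
  toFun x := ⟨(φ x : G), Subgroup.mem_map_of_mem R.subtype ⟨x, rfl⟩⟩
  map_one' := by ext; simp
  map_mul' x y := by ext; simp

/-- Restriction of a morphism along an inclusion of subgroups. -/
def restrHom {A B C : Subgroup G} (ψ : ↥A →* ↥C) (h : B ≤ A) : ↥B →* ↥C :=
  ψ.comp (Subgroup.inclusion h)

/-- The inclusion morphism `ι_A^P : A → P`. -/
def inclP (A : Subgroup G) : ↥A →* ↥(⊤ : Subgroup G) := Subgroup.inclusion le_top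

/-- The automorphism of `Q` induced by conjugation by `u ∈ N_G(Q)`. -/
def conjAut (Q : Subgroup G) (u : ↥(Subgroup.normalizer (Q : Set G))) : MulAut ↥Q where
  toFun x := ⟨(u : G) * x * (u : G)⁻¹, (Subgroup.mem_normalizer_iff.mp u.2 x).mp x.2⟩
  invFun x := ⟨(u : G)⁻¹ * x * (u : G),
    (Subgroup.mem_normalizer_iff.mp u.2 ((u : G)⁻¹ * x * (u : G))).mpr
      (by simpa [mul_assoc] using x.2)⟩
  left_inv x := by ext; simp [mul_assoc]
  right_inv x := by ext; simp [mul_assoc]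
  map_mul' x y := by ext; simp

/-- The homomorphism `N_G(Q) → Aut(Q)` given by conjugation. -/
def conjHomN (Q : Subgroup G) : ↥(Subgroup.normalizer (Q : Set G)) →* MulAut ↥Q where
  toFun := conjAut Q
  map_one' := by ext x; simp [conjAut]
  map_mul' u v := by ext x; simp [conjAut, mul_assoc]

/-- `F_R(Q)`: the group of automorphisms of `Q` induced by conjugation by elements of `R`. -/
def conjF (R Q : Subgroup G) : Subgroup (MulAut ↥Q) :=
  (R.subgroupOf (Subgroup.normalizer (Q : Set G))).map (conjHomN Q)

/-- `F(Q)`: the group of `F`-automorphisms of `Q`. -/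
def FAut (F : PCat G) (Q : Subgroup G) : Subgroup (MulAut ↥Q) :=
  Subgroup.closure {α : MulAut ↥Q | α.toMonoidHom ∈ F.Hom Q Q}

/-- `O_p(G)`: the largest normal `p`-subgroup of `G`. -/
def pCore (p : ℕ) (G : Type*) [Group G] : Subgroup G :=
  sSup {H : Subgroup G | H.Normal ∧ IsPGroup p ↥H}

/-- `N_P^K(Q)`. -/
def NPK (Q : Subgroup G) (K : Subgroup (MulAut ↥Q)) : Subgroup G :=
  (K.comap (conjHomN Q)).map (Subgroup.normalizer (Q : Set G)).subtype

/-- `^φK`: the image of `K ≤ Aut Q` in `Aut (φ(Q))` under the isomorphism induced by `φ`. -/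
def pushK {Q R : Subgroup G} (φ : ↥Q →* ↥R) (K : Subgroup (MulAut ↥Q)) :
    Subgroup (MulAut ↥(img φ)) :=
  Subgroup.closure {β | ∃ α ∈ K, ∀ x : ↥Q, β (toImg φ x) = toImg φ (α x)}

/-- `φ*K'`: the pull-back of `K' ≤ Aut (φ(Q))` to `Aut Q` under the isomorphism induced by `φ`. -/
def pullK {Q R : Subgroup G} (φ : ↥Q →* ↥R) (K' : Subgroup (MulAut ↥(img φ))) :
    Subgroup (MulAut ↥Q) :=
  Subgroup.closure {α | ∃ β ∈ K', ∀ x : ↥Q, toImg φ (α x) = β (toImg φ x)}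

/-- `Q` is fully `K`-normalized in `F`. -/
def FullyKNormalized (F : PCat G) (Q : Subgroup G) (K : Subgroup (MulAut ↥Q)) : Prop :=
  ∀ ψ ∈ F.Hom ⊤ (Q ⊔ NPK Q K),
    img (restrHom ψ le_sup_right) =
      NPK (img (restrHom ψ le_sup_left)) (pushK (restrHom ψ le_sup_left) K)

/-- The triple `(Q, K, φ)` is extensile in `F`. -/
def Extensile (F : PCat G) (Q : Subgroup G) (K : Subgroup (MulAut ↥Q))
    (φ : ↥Q →* ↥(⊤ : Subgroup G)) : Prop :=
  ∃ ψ ∈ F.Hom ⊤ (Q ⊔ NPK Q K), ∃ χ : MulAut ↥Q, χ ∈ K ∧ χ.toMonoidHom ∈ F.Hom Q Q ∧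
    ∀ u : ↥Q, restrHom ψ le_sup_left u = φ (χ u)

/-- The Sylow condition: `F_P(P)` is a Sylow `p`-subgroup of `F(P)`. -/
def SylowCond (p : ℕ) (F : PCat G) : Prop :=
  ∃ S : Sylow p ↥(FAut F (⊤ : Subgroup G)),
    (S : Subgroup ↥(FAut F (⊤ : Subgroup G))) =
      (conjF (⊤ : Subgroup G) (⊤ : Subgroup G)).subgroupOf (FAut F (⊤ : Subgroup G))

/-- The extension condition for a Frobenius `P`-category. -/
def ExtensionCond (F : PCat G) : Prop :=
  ∀ (Q : Subgroup G) (K : Subgroup (MulAut ↥Q)) (φ : ↥Q →* ↥(⊤ : Subgroup G)),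
    φ ∈ F.Hom ⊤ Q → FullyKNormalized F (img φ) (pushK φ K) → Extensile F Q K φ

/-- `F` is a Frobenius `P`-category. -/
def IsFrobenius (p : ℕ) (F : PCat G) : Prop :=
  F.IsDivisible ∧ SylowCond p F ∧ ExtensionCond F

/-- The free ℤ-module on all morphisms from `R` to `Q`. -/
abbrev Zmod (Q R : Subgroup G) : Type _ := (↥R →* ↥Q) →₀ ℤ

/-- Bilinear composition on the free ℤ-modules of morphisms. -/
noncomputable def dcomp {Q R T : Subgroup G} (a : Zmod Q R) (b : Zmod R T) : Zmod Q T :=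
  a.sum fun φ m => b.sum fun ψ n => Finsupp.single (φ.comp ψ) (m * n)

/-- `ℤF(Q,R)`: the free ℤ-module with basis `F(Q,R)`. -/
noncomputable def ZF (F : PCat G) (Q R : Subgroup G) : Submodule ℤ (Zmod Q R) :=
  Finsupp.supported ℤ ℤ (F.Hom Q R)

/-- `w_F(Q)`: the kernel of the augmentation `ℤF(P,Q) → ℤ`. -/
noncomputable def wF (F : PCat G) (Q : Subgroup G) : Submodule ℤ (Zmod (⊤ : Subgroup G) Q) :=
  ZF F ⊤ Q ⊓ LinearMap.ker (Finsupp.linearCombination ℤ fun _ => (1 : ℤ))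

/-- `r_F(Q) = w_F(P)∘ℤF(P,Q) + Σ_{|R|>|Q|} w_F(R)∘ℤF(R,Q)`. -/
noncomputable def rF (F : PCat G) (Q : Subgroup G) : Submodule ℤ (Zmod (⊤ : Subgroup G) Q) :=
  Submodule.span ℤ {x | ∃ R : Subgroup G, (R = ⊤ ∨ Nat.card ↥Q < Nat.card ↥R) ∧
    ∃ a ∈ wF F R, ∃ b ∈ ZF F R Q, x = dcomp a b}

/-- `Q` is `F`-essential. -/
def IsEssential (F : PCat G) (Q : Subgroup G) : Prop := rF F Q ≠ wF F Q

/-- `Q` is `F`-selfcentralizing. -/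
def SelfCentralizing (F : PCat G) (Q : Subgroup G) : Prop :=
  ∀ φ ∈ F.Hom (⊤ : Subgroup G) Q,
    Subgroup.centralizer (img φ : Set G) = (Subgroup.center ↥(img φ)).map (img φ).subtype

/-- `Q` is `F`-radical. -/
def Radical (p : ℕ) (F : PCat G) (Q : Subgroup G) : Prop :=
  SelfCentralizing F Q ∧ (pCore p ↥(FAut F Q)).map (FAut F Q).subtype = conjF Q Q

/-- `Q` is `F`-intersected. -/
def Intersected (F : PCat G) (Q : Subgroup G) : Prop :=
  SelfCentralizing F Q ∧
    conjF Q Q = ⨅ φ : ↥(F.Hom (⊤ : Subgroup G) Q), pullK φ.1 (conjF ⊤ (img φ.1))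

/-- The Alperin condition on `F`. -/
def AlperinCond (p : ℕ) (F : PCat G) : Prop :=
  ∀ Q : Subgroup G, IsEssential F Q → Radical p F Q ∧
    ∀ φ ∈ F.Hom (⊤ : Subgroup G) Q, ∀ φ' ∈ F.Hom (⊤ : Subgroup G) Q,
      ∃ σ ∈ F.Hom Q Q,
        Finsupp.single φ' (1 : ℤ) - Finsupp.single (φ.comp σ) 1 ∈ rF F Q

/-- The subgroup of `G` corresponding to a subgroup of a subgroup `N ≤ G`. -/
def liftSub {N : Subgroup G} (A : Subgroup ↥N) : Subgroup G := A.map N.subtype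

/-- The category `N_F^K(Q)` over the group `N_P^K(Q)`. -/
def NFK (F : PCat G) (Q : Subgroup G) (K : Subgroup (MulAut ↥Q)) : PCat ↥(NPK Q K) where
  Hom A B := {φ : ↥B →* ↥A | ∃ ψ ∈ F.Hom (Q ⊔ liftSub A) (Q ⊔ liftSub B), ∃ χ ∈ K,
    (∀ (x : G) (hxQ : x ∈ Q) (hx : x ∈ Q ⊔ liftSub B),
      ((ψ ⟨x, hx⟩ : ↥(Q ⊔ liftSub A)) : G) = ((χ ⟨x, hxQ⟩ : ↥Q) : G)) ∧
    (∀ (y : ↥B) (hy : ((y : ↥(NPK Q K)) : G) ∈ Q ⊔ liftSub B),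
      ((ψ ⟨((y : ↥(NPK Q K)) : G), hy⟩ : ↥(Q ⊔ liftSub A)) : G) =
        (((φ y : ↥A) : ↥(NPK Q K)) : G))}

/-- A generator family for `w_F`. -/
def GenFamily (F : PCat G) (S : ∀ Q : Subgroup G, Set (Zmod (⊤ : Subgroup G) Q)) : Prop :=
  (∀ Q : Subgroup G, Q ≠ ⊤ → S Q ⊆ (wF F Q : Set (Zmod (⊤ : Subgroup G) Q))) ∧
  ∀ Q : Subgroup G, Q ≠ ⊤ →
    wF F Q = Submodule.span ℤ {x | ∃ R : Subgroup G, R ≠ ⊤ ∧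
      ∃ a ∈ S R, ∃ φ ∈ F.Hom R Q, x = dcomp a (Finsupp.single φ (1 : ℤ))}

/-- `F^𝔛` is a partial Frobenius `P`-category. -/
def PartialFrobenius (p : ℕ) (F : PCat G) (X : Set (Subgroup G)) : Prop :=
  SylowCond p F ∧ ∀ Q ∈ X, ∀ (K : Subgroup (MulAut ↥Q)) (φ : ↥Q →* ↥(⊤ : Subgroup G)),
    φ ∈ F.Hom ⊤ Q → FullyKNormalized F (img φ) (pushK φ K) → Extensile F Q K φ

/-- The closure condition on the set of subgroups `𝔛`. -/
def XClosed (F : PCat G) (X : Set (Subgroup G)) : Prop :=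
  X.Nonempty ∧ ∀ Q : Subgroup G, (∃ R ∈ X, (F.Hom Q R).Nonempty) → Q ∈ X

section Aux

variable {G' : Type*} [Group G']

/-- Bilinear version of `dcomp`. -/
noncomputable def dcompL {Q R T : Subgroup G'} :
    Zmod Q R →ₗ[ℤ] Zmod R T →ₗ[ℤ] Zmod Q T :=
  Finsupp.lsum ℤ fun φ => LinearMap.toSpanSingleton ℤ _
    (Finsupp.lsum (R := ℤ) ℤ fun ψ => Finsupp.lsingle (φ.comp ψ))

lemma dcomp_zero_left {Q R T : Subgroup G'} (b : Zmod R T) :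
    dcomp (0 : Zmod Q R) b = 0 := by simp [dcomp]

lemma dcomp_add_left {Q R T : Subgroup G'} (x y : Zmod Q R) (b : Zmod R T) :
    dcomp (x + y) b = dcomp x b + dcomp y b := by
  classical
  rw [dcomp, dcomp, dcomp, Finsupp.sum_add_index]
  · intro φ _; simp
  · intro φ _ m₁ m₂
    rw [← Finsupp.sum_add]
    congr 1; ext ψ n
    rw [add_mul, Finsupp.single_add]

lemma dcomp_single_left {Q R T : Subgroup G'} (φ : ↥R →* ↥Q) (m : ℤ) (b : Zmod R T) :
    dcomp (Finsupp.single φ m) b = b.sum fun ψ n => Finsupp.single (φ.comp ψ) (m * n) := by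
  rw [dcomp, Finsupp.sum_single_index]
  simp

lemma dcompL_apply {Q R T : Subgroup G'} (a : Zmod Q R) (b : Zmod R T) :
    dcompL a b = dcomp a b := by
  classical
  induction a using Finsupp.induction_linear with
  | zero => simp [dcomp_zero_left]
  | add x y hx hy => simp [map_add, hx, hy, dcomp_add_left]
  | single φ m =>
    rw [dcomp_single_left, dcompL, Finsupp.lsum_single, LinearMap.toSpanSingleton_apply,
      LinearMap.smul_apply, Finsupp.lsum_apply, Finsupp.smul_sum]
    congr 1; ext ψ n
    rw [Finsupp.lsingle_apply, Finsupp.smul_single, smul_eq_mul]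

lemma dcomp_single_single {Q R T : Subgroup G'} (φ : ↥R →* ↥Q) (ψ : ↥T →* ↥R)
    (m n : ℤ) :
    dcomp (Finsupp.single φ m) (Finsupp.single ψ n) =
      Finsupp.single (φ.comp ψ) (m * n) := by
  simp [dcomp, Finsupp.sum_single_index]

lemma dcomp_assoc {Q R T U : Subgroup G'} (a : Zmod Q R) (b : Zmod R T) (c : Zmod T U) :
    dcomp (dcomp a b) c = dcomp a (dcomp b c) := by
  simp only [← dcompL_apply]
  induction a using Finsupp.induction_linear with
  | zero => simp
  | add x y hx hy => simp [map_add, hx, hy]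
  | single φ m =>
    induction b using Finsupp.induction_linear with
    | zero => simp
    | add x y hx hy => simp [map_add, hx, hy]
    | single ψ n =>
      induction c using Finsupp.induction_linear with
      | zero => simp
      | add x y hx hy => simp [map_add, hx, hy]
      | single χ k =>
        simp only [dcompL_apply, dcomp_single_single]
        rw [MonoidHom.comp_assoc, mul_assoc]

lemma dcomp_mem_ZF {F : PCat G'} (hF : F.IsDivisible) {A B C : Subgroup G'}
    {a : Zmod A B} {b : Zmod B C} (ha : a ∈ ZF F A B) (hb : b ∈ ZF F B C) :
    dcomp a b ∈ ZF F A C := by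
  classical
  rw [ZF, Finsupp.mem_supported] at *
  intro χ hχ
  simp only [Finset.mem_coe] at hχ
  obtain ⟨φ, hφ, hχ⟩ := Finset.mem_biUnion.mp (Finsupp.support_sum hχ)
  obtain ⟨ψ, hψ, hχ⟩ := Finset.mem_biUnion.mp (Finsupp.support_sum hχ)
  have := Finsupp.support_single_subset hχ
  simp only [Finset.mem_singleton] at this
  subst this
  exact hF.comp_mem (ha hφ) (hb hψ)

lemma eps_dcomp {A B C : Subgroup G'} (a : Zmod A B) (b : Zmod B C) :
    Finsupp.linearCombination ℤ (fun _ => (1 : ℤ)) (dcomp a b) =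
      Finsupp.linearCombination ℤ (fun _ => (1 : ℤ)) a *
        Finsupp.linearCombination ℤ (fun _ => (1 : ℤ)) b := by
  simp only [← dcompL_apply]
  induction a using Finsupp.induction_linear with
  | zero => simp
  | add x y hx hy => simp [map_add, hx, hy]; ring
  | single φ m =>
    induction b using Finsupp.induction_linear with
    | zero => simp
    | add x y hx hy => simp [map_add, hx, hy]; ring
    | single ψ n =>
      simp only [dcompL_apply, dcomp_single_single, Finsupp.linearCombination_single,
        smul_eq_mul, mul_one]

lemma dcomp_mem_wF {F : PCat G'} (hF : F.IsDivisible) {R Q : Subgroup G'}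
    {a : Zmod (⊤ : Subgroup G') R} {b : Zmod R Q} (ha : a ∈ wF F R) (hb : b ∈ ZF F R Q) :
    dcomp a b ∈ wF F Q := by
  obtain ⟨ha1, ha2⟩ := Submodule.mem_inf.mp ha
  rw [LinearMap.mem_ker] at ha2
  refine Submodule.mem_inf.mpr ⟨dcomp_mem_ZF hF ha1 hb, LinearMap.mem_ker.mpr ?_⟩
  rw [eps_dcomp, ha2, zero_mul]

lemma rF_le_wF {F : PCat G'} (hF : F.IsDivisible) (Q : Subgroup G') :
    rF F Q ≤ wF F Q := by
  rw [rF, Submodule.span_le]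
  rintro x ⟨R, _, a, ha, b, hb, rfl⟩
  exact dcomp_mem_wF hF ha hb

lemma inclusion_mem {F : PCat G'} (hF : F.IsDivisible) {A B : Subgroup G'} (h : A ≤ B) :
    Subgroup.inclusion h ∈ F.Hom B A := by
  have h1 : ∀ x ∈ A, (1 : G') * x * 1⁻¹ ∈ B := fun x hx => by simpa using h hx
  have he : conjMap (1 : G') h1 = Subgroup.inclusion h := by
    refine MonoidHom.ext fun x => Subtype.ext ?_
    simp [conjMap]
  rw [← he]
  exact hF.conj_mem 1 h1

lemma dcomp_single_id {A B : Subgroup G'} (a : Zmod A B) (ψ : ↥B →* ↥B)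
    (hψ : ∀ χ : ↥B →* ↥A, χ.comp ψ = χ) :
    dcomp a (Finsupp.single ψ 1) = a := by
  classical
  rw [dcomp]
  have : ∀ φ : ↥B →* ↥A, ∀ m : ℤ,
      (Finsupp.single ψ (1 : ℤ)).sum (fun ψ' n => Finsupp.single (φ.comp ψ') (m * n)) =
        Finsupp.single φ m := by
    intro φ m
    rw [Finsupp.sum_single_index (by simp)]
    rw [hψ, mul_one]
  simp only [this]
  exact Finsupp.sum_single a

end Aux

/-- **Proposition 1.9** (second part): for any `F`-essential subgroup `Q` of `P` there is
`φ ∈ F(P,Q)` such that `S_{φ(Q)}` contains an `F`-irreducible element. -/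
theorem generator_family_contains_irreducible
    (p : ℕ) [Fact p.Prime] {P : Type*} [Group P] [Finite P] (hP : IsPGroup p P)
    (F : PCat P) (hF : F.IsDivisible)
    (S : ∀ Q : Subgroup P, Set (Zmod (⊤ : Subgroup P) Q)) (hS : GenFamily F S)
    (Q : Subgroup P) (hQ : IsEssential F Q) :
    ∃ φ ∈ F.Hom (⊤ : Subgroup P) Q,
      ∃ a ∈ S (img φ), a ∈ wF F (img φ) ∧ a ∉ rF F (img φ) := by
  classical
  -- `Q` is a proper subgroup, since `rF F ⊤ = wF F ⊤`
  have hQtop : Q ≠ ⊤ := by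
    rintro rfl
    apply hQ
    refine le_antisymm (rF_le_wF hF ⊤) ?_
    intro a ha
    apply Submodule.subset_span
    refine ⟨⊤, Or.inl rfl, a, ha,
      Finsupp.single (Subgroup.inclusion le_rfl) 1,
      Finsupp.single_mem_supported ℤ 1 (inclusion_mem hF le_rfl), ?_⟩
    rw [dcomp_single_id]
    intro χ
    refine MonoidHom.ext fun x => ?_
    simp [Subgroup.inclusion]
  -- pick a generator of `wF F Q` which is not in `rF F Q`
  have hle : rF F Q ≤ wF F Q := rF_le_wF hF Q
  have hWQ := hS.2 Q hQtop
  have hall : ¬ {x | ∃ R : Subgroup P, R ≠ ⊤ ∧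
      ∃ a ∈ S R, ∃ φ ∈ F.Hom R Q, x = dcomp a (Finsupp.single φ (1 : ℤ))} ⊆
        (rF F Q : Set (Zmod (⊤ : Subgroup P) Q)) := by
    intro h
    exact hQ (le_antisymm hle (by rw [hWQ]; exact Submodule.span_le.mpr h))
  obtain ⟨x, hxset, hxr⟩ := Set.not_subset.mp hall
  obtain ⟨R, hRtop, a, haS, φ, hφ, rfl⟩ := hxset
  have haw : a ∈ wF F R := hS.1 R hRtop haS
  have hsφ : Finsupp.single φ (1 : ℤ) ∈ ZF F R Q :=
    Finsupp.single_mem_supported ℤ 1 hφ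
  -- `|R| ≤ |Q|`, hence `|R| = |Q|` and `φ` is bijective
  have hcard : ¬ Nat.card ↥Q < Nat.card ↥R := by
    intro hlt
    exact hxr (Submodule.subset_span ⟨R, Or.inr hlt, a, haw, _, hsφ, rfl⟩)
  have hinj : Function.Injective φ := hF.inj hφ
  have hcardeq : Nat.card ↥Q = Nat.card ↥R :=
    le_antisymm (Nat.card_le_card_of_injective φ hinj) (not_lt.mp hcard)
  have hbij : Function.Bijective φ :=
    (Nat.bijective_iff_injective_and_card φ).mpr ⟨hinj, hcardeq⟩
  -- the morphism `Φ : Q → P` with image `R`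
  set Φ : ↥Q →* ↥(⊤ : Subgroup P) := (Subgroup.inclusion le_top).comp φ with hΦdef
  have hΦ : Φ ∈ F.Hom ⊤ Q := hF.comp_mem (inclusion_mem hF le_top) hφ
  have himg : img Φ = R := by
    ext y
    simp only [img, Subgroup.mem_map, MonoidHom.mem_range]
    constructor
    · rintro ⟨z, ⟨x, rfl⟩, rfl⟩
      simpa [hΦdef, Subgroup.inclusion] using (φ x).2
    · intro hy
      obtain ⟨x, hx⟩ := hbij.2 ⟨y, hy⟩
      exact ⟨Φ x, ⟨x, rfl⟩, by simp [hΦdef, hx, Subgroup.inclusion]⟩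
  refine ⟨Φ, hΦ, ?_⟩
  rw [himg]
  refine ⟨a, haS, haw, fun har => hxr ?_⟩
  -- right composition with `φ` maps `rF F R` into `rF F Q`
  have key : ∀ x ∈ rF F R, dcomp x (Finsupp.single φ (1 : ℤ)) ∈ rF F Q := by
    intro x hx
    induction hx using Submodule.span_induction with
    | mem y hy =>
      obtain ⟨T, hT, c, hc, b, hb, rfl⟩ := hy
      rw [dcomp_assoc]
      apply Submodule.subset_span
      refine ⟨T, ?_, c, hc, dcomp b (Finsupp.single φ 1), dcomp_mem_ZF hF hb hsφ, rfl⟩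
      rcases hT with h | h
      · exact Or.inl h
      · exact Or.inr (by rw [hcardeq]; exact h)
    | zero =>
      rw [← dcompL_apply, map_zero, LinearMap.zero_apply]
      exact Submodule.zero_mem _
    | add x y _ _ hx hy =>
      rw [← dcompL_apply, map_add, LinearMap.add_apply, dcompL_apply, dcompL_apply]
      exact Submodule.add_mem _ hx hy
    | smul r x _ hx =>
      rw [← dcompL_apply, map_smul, LinearMap.smul_apply, dcompL_apply]
      exact Submodule.smul_mem _ r hx
  exact key a har

end Puig
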